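/- Let K be a field, N ≥ 2 an integer, and t, X nonzero elements of K with t^2 ≠ 1. Write [n] = (t^n − t^{−n})/(t − t^{−1}) for n ∈ ℤ. Let V be the free K-vector space with basis {v_a : a ∈ ℤ^{N−1}}, with the convention a_N := 0, and define operators E_i, F_i (1 ≤ i ≤ N−1) by: E_i v_a = [a_i − a_{i+1}] v_{a − e_i}; F_1 v_a = ((X t^{−a_1} − X^{−1} t^{a_1})/(t − t^{−1})) v_{a + e_1} and F_i v_a = [a_{i−1} − a_i] v_{a + e_i} for i ≥ 2. Then the quantum Serre relations hold: whenever |i − j| = 1, E_i^2 E_j − (t + t^{−1}) E_i E_j E_i + E_j E_i^2 = 0 and F_i^2 F_j − (t + t^{−1}) F_i F_j F_i + F_j F_i^2 = 0; and whenever |i − j| > 1, E_i E_j = E_j E_i, F_i F_j = F_j F_i, and E_i F_j = F_j E_i. -/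

import Mathlib

/-- Quantum integer `[n] = (tⁿ - t⁻ⁿ)/(t - t⁻¹)` (here `t = q^{1/2}`). -/
noncomputable def qint {K : Type*} [Field K] (t : K) (n : ℤ) : K :=
  (t ^ n - t ^ (-n)) / (t - t⁻¹)

/-- For `a = (a_1, …, a_n) ∈ ℤⁿ`, `aEntry a m` is `a_m` for `1 ≤ m ≤ n`, with the
convention that entries outside this range (in particular `a_N = a_{n+1}`) are `0`. -/
def aEntry {n : ℕ} (a : Fin n → ℤ) (m : ℕ) : ℤ :=
  if h : 1 ≤ m ∧ m ≤ n then a ⟨m - 1, by omega⟩ else 0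

section
variable {K : Type*} [Field K]

lemma qint_rec {t : K} (ht : t ≠ 0) (n : ℤ) :
    qint t (n + 1) + qint t (n - 1) = (t + t⁻¹) * qint t n := by
  unfold qint
  rw [← add_div, mul_div_assoc']
  congr 1
  have hs : t ^ n ≠ 0 := zpow_ne_zero _ ht
  have e1 : t ^ (n + 1) = t ^ n * t := zpow_add_one₀ ht n
  have e2 : t ^ (n - 1) = t ^ n / t := by rw [zpow_sub₀ ht, zpow_one]
  have e3 : t ^ (-(n + 1)) = (t ^ n * t)⁻¹ := by rw [zpow_neg, e1]
  have e4 : t ^ (-(n - 1)) = (t ^ n / t)⁻¹ := by rw [zpow_neg, e2]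
  rw [e1, e2, e3, e4, zpow_neg]
  field_simp
  ring

lemma end_ext {ι : Type*} {f g : Module.End K ((ι → ℤ) →₀ K)}
    (h : ∀ a, f (Finsupp.single a 1) = g (Finsupp.single a 1)) : f = g := by
  refine Finsupp.lhom_ext fun a b => ?_
  have hb : (Finsupp.single a b) = b • Finsupp.single a 1 := by
    rw [Finsupp.smul_single, smul_eq_mul, mul_one]
  rw [hb, map_smul, map_smul, h]

lemma aEntry_sub_single {n : ℕ} (a : Fin n → ℤ) (i : Fin n) (m : ℕ) :
    aEntry (a - Pi.single i 1) m = aEntry a m - (if m = i.val + 1 then 1 else 0) := by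
  unfold aEntry
  split
  · rename_i h
    rw [Pi.sub_apply, Pi.single_apply]
    have : ((⟨m - 1, by omega⟩ : Fin n) = i) ↔ m = i.val + 1 := by
      simp only [Fin.ext_iff]; omega
    split_ifs with h1 h2 h2 <;> simp_all <;> omega
  · rename_i h
    have : ¬ (m = i.val + 1) := by have := i.isLt; omega
    simp [this]

lemma aEntry_add_single {n : ℕ} (a : Fin n → ℤ) (i : Fin n) (m : ℕ) :
    aEntry (a + Pi.single i 1) m = aEntry a m + (if m = i.val + 1 then 1 else 0) := by
  unfold aEntry
  split
  · rename_i h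
    rw [Pi.add_apply, Pi.single_apply]
    have : ((⟨m - 1, by omega⟩ : Fin n) = i) ↔ m = i.val + 1 := by
      simp only [Fin.ext_iff]; omega
    split_ifs with h1 h2 h2 <;> simp_all <;> omega
  · rename_i h
    have : ¬ (m = i.val + 1) := by have := i.isLt; omega
    simp [this]

end

set_option maxHeartbeats 2000000

/-- On the free module with basis `{v_a : a ∈ ℤ^{N-1}}` with the Verma-module actions of
`E_i`, `F_i`, the quantum Serre relations hold: for `|i−j| = 1`,
`E_i² E_j − (t + t⁻¹) E_i E_j E_i + E_j E_i² = 0` (and likewise for `F`), and for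
`|i−j| > 1` the operators `E_i, E_j` commute, `F_i, F_j` commute, and `E_i, F_j`
commute. -/

theorem verma_Serre_relations {K : Type*} [Field K] (N : ℕ) (hN : 2 ≤ N) (t X : K)
    (ht : t ≠ 0) (ht2 : t ^ 2 ≠ 1) (hX : X ≠ 0)
    (E F : Fin (N - 1) → Module.End K ((Fin (N - 1) → ℤ) →₀ K))
    (hE : ∀ (i : Fin (N - 1)) (a : Fin (N - 1) → ℤ),
      E i (Finsupp.single a 1) =
        qint t (aEntry a (i.val + 1) - aEntry a (i.val + 2)) •
          Finsupp.single (a - Pi.single i 1) 1)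
    (hF1 : ∀ (i : Fin (N - 1)) (a : Fin (N - 1) → ℤ), i.val = 0 →
      F i (Finsupp.single a 1) =
        ((X * t ^ (-aEntry a 1) - X⁻¹ * t ^ (aEntry a 1)) / (t - t⁻¹)) •
          Finsupp.single (a + Pi.single i 1) 1)
    (hFi : ∀ (i : Fin (N - 1)) (a : Fin (N - 1) → ℤ), 1 ≤ i.val →
      F i (Finsupp.single a 1) =
        qint t (aEntry a i.val - aEntry a (i.val + 1)) •
          Finsupp.single (a + Pi.single i 1) 1) :
    (∀ i j : Fin (N - 1), |(i.val : ℤ) - (j.val : ℤ)| = 1 →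
      E i * E i * E j - (t + t⁻¹) • (E i * E j * E i) + E j * (E i * E i) = 0 ∧
      F i * F i * F j - (t + t⁻¹) • (F i * F j * F i) + F j * (F i * F i) = 0) ∧
    (∀ i j : Fin (N - 1), 1 < |(i.val : ℤ) - (j.val : ℤ)| →
      E i * E j = E j * E i ∧ F i * F j = F j * F i ∧ E i * F j = F j * E i) := by
  constructor
  · intro i j hij
    have hij' : j.val = i.val + 1 ∨ i.val = j.val + 1 := by
      rcases (abs_eq (by norm_num)).mp hij with h | h <;> omega
    constructor
    · -- E Serre
      apply end_ext; intro a
      simp only [Module.End.mul_apply, LinearMap.sub_apply, LinearMap.add_apply,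
        LinearMap.smul_apply, LinearMap.zero_apply, map_smul, hE, smul_smul,
        aEntry_sub_single]
      rw [show a - Pi.single i 1 - Pi.single j 1 - Pi.single i 1
            = a - Pi.single j 1 - Pi.single i 1 - Pi.single i 1 from by abel,
          show a - Pi.single i 1 - Pi.single i 1 - Pi.single j 1
            = a - Pi.single j 1 - Pi.single i 1 - Pi.single i 1 from by abel,
          ← sub_smul, ← add_smul]
      apply smul_eq_zero_of_left
      split_ifs <;> try omega
      · linear_combination (norm := ring_nf) (qint t (aEntry a (↑j+1) - aEntry a (↑j+2)) *
          qint t (aEntry a (↑i+1) - aEntry a (↑i+2))) *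
          qint_rec ht (aEntry a (↑i+1) - aEntry a (↑i+2))
      · linear_combination (norm := ring_nf) (qint t (aEntry a (↑i+1) - aEntry a (↑i+2)) *
          qint t (aEntry a (↑i+1) - aEntry a (↑i+2) - 1)) *
          qint_rec ht (aEntry a (↑j+1) - aEntry a (↑j+2) + 1)
    · -- F Serre
      apply end_ext; intro a
      have vrw1 : a + Pi.single i 1 + Pi.single j 1 + Pi.single i 1
          = a + Pi.single j 1 + Pi.single i 1 + Pi.single i 1 := by abel
      have vrw2 : a + Pi.single i 1 + Pi.single i 1 + Pi.single j 1
          = a + Pi.single j 1 + Pi.single i 1 + Pi.single i 1 := by abel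
      rcases hij' with h | h
      · -- j = i + 1
        have hfj : ∀ b, F j (Finsupp.single b 1) =
            qint t (aEntry b j.val - aEntry b (j.val + 1)) •
              Finsupp.single (b + Pi.single j 1) 1 := fun b => hFi j b (by omega)
        rcases Nat.eq_zero_or_pos i.val with hi | hi
        · -- i = 0
          have hfi : ∀ b, F i (Finsupp.single b 1) =
              ((X * t ^ (-aEntry b 1) - X⁻¹ * t ^ (aEntry b 1)) / (t - t⁻¹)) •
                Finsupp.single (b + Pi.single i 1) 1 := fun b => hF1 i b hi
          simp only [Module.End.mul_apply, LinearMap.sub_apply, LinearMap.add_apply,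
            LinearMap.smul_apply, LinearMap.zero_apply, map_smul, hfi, hfj, smul_smul,
            aEntry_add_single]
          rw [vrw1, vrw2, ← sub_smul, ← add_smul]
          apply smul_eq_zero_of_left
          split_ifs <;> try omega
          all_goals linear_combination (norm := ring_nf) (((X * t ^ (-aEntry a 1) - X⁻¹ * t ^ (aEntry a 1)) / (t - t⁻¹)) * ((X * t ^ (-(aEntry a 1 + 1)) - X⁻¹ * t ^ (aEntry a 1 + 1)) / (t - t⁻¹))) * qint_rec ht ((aEntry a ↑j - aEntry a (↑j + 1)) + 1)
        · -- i ≥ 1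
          have hfi : ∀ b, F i (Finsupp.single b 1) =
              qint t (aEntry b i.val - aEntry b (i.val + 1)) •
                Finsupp.single (b + Pi.single i 1) 1 := fun b => hFi i b hi
          simp only [Module.End.mul_apply, LinearMap.sub_apply, LinearMap.add_apply,
            LinearMap.smul_apply, LinearMap.zero_apply, map_smul, hfi, hfj, smul_smul,
            aEntry_add_single]
          rw [vrw1, vrw2, ← sub_smul, ← add_smul]
          apply smul_eq_zero_of_left
          split_ifs <;> try omega
          all_goals linear_combination (norm := ring_nf) (qint t (aEntry a ↑i - aEntry a (↑i + 1)) * qint t ((aEntry a ↑i - aEntry a (↑i + 1)) - 1)) * qint_rec ht ((aEntry a ↑j - aEntry a (↑j + 1)) + 1)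
      · -- i = j + 1
        have hfi : ∀ b, F i (Finsupp.single b 1) =
            qint t (aEntry b i.val - aEntry b (i.val + 1)) •
              Finsupp.single (b + Pi.single i 1) 1 := fun b => hFi i b (by omega)
        rcases Nat.eq_zero_or_pos j.val with hj | hj
        · -- j = 0
          have hfj : ∀ b, F j (Finsupp.single b 1) =
              ((X * t ^ (-aEntry b 1) - X⁻¹ * t ^ (aEntry b 1)) / (t - t⁻¹)) •
                Finsupp.single (b + Pi.single j 1) 1 := fun b => hF1 j b hj
          simp only [Module.End.mul_apply, LinearMap.sub_apply, LinearMap.add_apply,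
            LinearMap.smul_apply, LinearMap.zero_apply, map_smul, hfi, hfj, smul_smul,
            aEntry_add_single]
          rw [vrw1, vrw2, ← sub_smul, ← add_smul]
          apply smul_eq_zero_of_left
          split_ifs <;> try omega
          all_goals linear_combination (norm := ring_nf) (((X * t ^ (-aEntry a 1) - X⁻¹ * t ^ (aEntry a 1)) / (t - t⁻¹)) * qint t (aEntry a ↑i - aEntry a (↑i + 1))) * qint_rec ht (aEntry a ↑i - aEntry a (↑i + 1))
        · -- j ≥ 1
          have hfj : ∀ b, F j (Finsupp.single b 1) =
              qint t (aEntry b j.val - aEntry b (j.val + 1)) •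
                Finsupp.single (b + Pi.single j 1) 1 := fun b => hFi j b hj
          simp only [Module.End.mul_apply, LinearMap.sub_apply, LinearMap.add_apply,
            LinearMap.smul_apply, LinearMap.zero_apply, map_smul, hfi, hfj, smul_smul,
            aEntry_add_single]
          rw [vrw1, vrw2, ← sub_smul, ← add_smul]
          apply smul_eq_zero_of_left
          split_ifs <;> try omega
          all_goals linear_combination (norm := ring_nf) (qint t (aEntry a ↑j - aEntry a (↑j + 1)) * qint t (aEntry a ↑i - aEntry a (↑i + 1))) * qint_rec ht (aEntry a ↑i - aEntry a (↑i + 1))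
  · intro i j hij
    have hij' : i.val + 2 ≤ j.val ∨ j.val + 2 ≤ i.val := by
      rcases lt_abs.mp hij with h | h <;> omega
    refine ⟨?_, ?_, ?_⟩
    · -- E E
      apply end_ext; intro a
      simp only [Module.End.mul_apply, map_smul, hE, smul_smul, aEntry_sub_single]
      split_ifs <;> try omega
      simp only [add_zero, sub_zero]
      rw [show a - Pi.single j 1 - Pi.single i 1 = a - Pi.single i 1 - Pi.single j 1
        from by abel, mul_comm]
    · -- F F
      apply end_ext; intro a
      rcases Nat.eq_zero_or_pos i.val with hi | hi
      · have hfi : ∀ b, F i (Finsupp.single b 1) =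
            ((X * t ^ (-aEntry b 1) - X⁻¹ * t ^ (aEntry b 1)) / (t - t⁻¹)) •
              Finsupp.single (b + Pi.single i 1) 1 := fun b => hF1 i b hi
        have hfj : ∀ b, F j (Finsupp.single b 1) =
            qint t (aEntry b j.val - aEntry b (j.val + 1)) •
              Finsupp.single (b + Pi.single j 1) 1 := fun b => hFi j b (by omega)
        simp only [Module.End.mul_apply, map_smul, hfi, hfj, smul_smul, aEntry_add_single]
        split_ifs <;> try omega
        simp only [add_zero, sub_zero]
        rw [show a + Pi.single j 1 + Pi.single i 1 = a + Pi.single i 1 + Pi.single j 1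
          from by abel, mul_comm]
      · rcases Nat.eq_zero_or_pos j.val with hj | hj
        · have hfj : ∀ b, F j (Finsupp.single b 1) =
              ((X * t ^ (-aEntry b 1) - X⁻¹ * t ^ (aEntry b 1)) / (t - t⁻¹)) •
                Finsupp.single (b + Pi.single j 1) 1 := fun b => hF1 j b hj
          have hfi : ∀ b, F i (Finsupp.single b 1) =
              qint t (aEntry b i.val - aEntry b (i.val + 1)) •
                Finsupp.single (b + Pi.single i 1) 1 := fun b => hFi i b hi
          simp only [Module.End.mul_apply, map_smul, hfi, hfj, smul_smul, aEntry_add_single]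
          split_ifs <;> try omega
          simp only [add_zero, sub_zero]
          rw [show a + Pi.single j 1 + Pi.single i 1 = a + Pi.single i 1 + Pi.single j 1
            from by abel, mul_comm]
        · have hfi : ∀ b, F i (Finsupp.single b 1) =
              qint t (aEntry b i.val - aEntry b (i.val + 1)) •
                Finsupp.single (b + Pi.single i 1) 1 := fun b => hFi i b hi
          have hfj : ∀ b, F j (Finsupp.single b 1) =
              qint t (aEntry b j.val - aEntry b (j.val + 1)) •
                Finsupp.single (b + Pi.single j 1) 1 := fun b => hFi j b hj
          simp only [Module.End.mul_apply, map_smul, hfi, hfj, smul_smul, aEntry_add_single]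
          split_ifs <;> try omega
          simp only [add_zero, sub_zero]
          rw [show a + Pi.single j 1 + Pi.single i 1 = a + Pi.single i 1 + Pi.single j 1
            from by abel, mul_comm]
    · -- E F
      apply end_ext; intro a
      rcases Nat.eq_zero_or_pos j.val with hj | hj
      · have hfj : ∀ b, F j (Finsupp.single b 1) =
            ((X * t ^ (-aEntry b 1) - X⁻¹ * t ^ (aEntry b 1)) / (t - t⁻¹)) •
              Finsupp.single (b + Pi.single j 1) 1 := fun b => hF1 j b hj
        simp only [Module.End.mul_apply, map_smul, hE, hfj, smul_smul, aEntry_add_single,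
          aEntry_sub_single]
        split_ifs <;> try omega
        simp only [add_zero, sub_zero]
        rw [show a + Pi.single j 1 - Pi.single i 1 = a - Pi.single i 1 + Pi.single j 1
          from by abel, mul_comm]
      · have hfj : ∀ b, F j (Finsupp.single b 1) =
            qint t (aEntry b j.val - aEntry b (j.val + 1)) •
              Finsupp.single (b + Pi.single j 1) 1 := fun b => hFi j b hj
        simp only [Module.End.mul_apply, map_smul, hE, hfj, smul_smul, aEntry_add_single,
          aEntry_sub_single]
        split_ifs <;> try omega
        simp only [add_zero, sub_zero]
        rw [show a + Pi.single j 1 - Pi.single i 1 = a - Pi.single i 1 + Pi.single j 1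
          from by abel, mul_comm]
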